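/- Let K : ℝ → ℝ be continuous with K t < 0 for all t, and let f satisfy f'' + K·f = 0 with f 0 = 1 and f' 0 = 0. Then f t ≥ 1 for all t ∈ ℝ. -/

import Mathlib

lemma jacobi_aux (K f : ℝ → ℝ)
    (hKneg : ∀ t, K t < 0)
    (hf : ContDiff ℝ 2 f)
    (hode : ∀ t, deriv (deriv f) t + K t * f t = 0)
    (h0 : f 0 = 1) (h0' : deriv f 0 = 0) :
    ∀ t, 0 ≤ t → 1 ≤ f t := by
  have hd1 : Differentiable ℝ f := hf.differentiable (by norm_num)
  have hf' : ContDiff ℝ 1 (deriv f) := by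
    have := (contDiff_succ_iff_deriv (n := 1)).mp (by exact_mod_cast hf)
    exact this.2.2
  have hd2 : Differentiable ℝ (deriv f) := hf'.differentiable (by norm_num)
  intro t0 ht0
  by_contra h
  push_neg at h
  set ℓ : ℝ := (max (f t0) 0 + 1) / 2 with hℓdef
  have hmax1 : max (f t0) 0 < 1 := max_lt h one_pos
  have hℓ0 : 0 < ℓ := by
    have := le_max_right (f t0) 0; simp only [hℓdef]; linarith
  have hℓ1 : ℓ < 1 := by simp only [hℓdef]; linarith
  have hft0 : f t0 < ℓ := by
    have := le_max_left (f t0) 0; simp only [hℓdef]; linarith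
  set S : Set ℝ := Set.Icc 0 t0 ∩ {t | f t ≤ ℓ} with hSdef
  have hScl : IsClosed S := isClosed_Icc.inter (isClosed_le hf.continuous continuous_const)
  have hSne : S.Nonempty := ⟨t0, ⟨ht0, le_rfl⟩, hft0.le⟩
  have hSbdd : BddBelow S := ⟨0, fun x hx => hx.1.1⟩
  set c : ℝ := sInf S with hcdef
  have hcS : c ∈ S := hScl.csInf_mem hSne hSbdd
  have hc0 : 0 < c := by
    rcases lt_or_eq_of_le hcS.1.1 with h' | h'
    · exact h'
    · exfalso; have : f c ≤ ℓ := hcS.2; rw [← h', h0] at this; linarith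
  have hct0 : c ≤ t0 := hcS.1.2
  -- for 0 < x < c, f x > ℓ
  have hfx : ∀ x, 0 ≤ x → x < c → ℓ < f x := by
    intro x hx0 hxc
    by_contra hle
    push_neg at hle
    have : x ∈ S := ⟨⟨hx0, hxc.le.trans hct0⟩, hle⟩
    exact absurd (csInf_le hSbdd this) (not_le.mpr hxc)
  -- deriv f is strictly monotone on [0, c]
  have hmono : StrictMonoOn (deriv f) (Set.Icc 0 c) := by
    apply strictMonoOn_of_deriv_pos (convex_Icc 0 c) hd2.continuous.continuousOn
    intro x hx
    rw [interior_Icc] at hx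
    have hfxpos : 0 < f x := lt_trans hℓ0 (hfx x hx.1.le hx.2)
    have := hode x
    nlinarith [mul_pos (neg_pos.mpr (hKneg x)) hfxpos]
  -- hence deriv f > 0 on (0, c)
  have hderivpos : ∀ x ∈ Set.Ioo 0 c, 0 < deriv f x := by
    intro x hx
    have := hmono (Set.left_mem_Icc.mpr hc0.le) ⟨hx.1.le, hx.2.le⟩ hx.1
    rwa [h0'] at this
  -- hence f strictly monotone on [0, c], so f c > f 0 = 1, contradiction
  have hfmono : StrictMonoOn f (Set.Icc 0 c) := by
    apply strictMonoOn_of_deriv_pos (convex_Icc 0 c) hd1.continuous.continuousOn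
    intro x hx
    rw [interior_Icc] at hx
    exact hderivpos x hx
  have : f 0 < f c := hfmono (Set.left_mem_Icc.mpr hc0.le) (Set.right_mem_Icc.mpr hc0.le) hc0
  rw [h0] at this
  have : f c ≤ ℓ := hcS.2
  linarith

theorem jacobi_ge_one (K f : ℝ → ℝ)
    (hK : Continuous K) (hKneg : ∀ t, K t < 0)
    (hf : ContDiff ℝ 2 f)
    (hode : ∀ t, deriv (deriv f) t + K t * f t = 0)
    (h0 : f 0 = 1) (h0' : deriv f 0 = 0) :
    ∀ t, 1 ≤ f t := by
  intro t
  rcases le_or_gt 0 t with ht | ht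
  · exact jacobi_aux K f hKneg hf hode h0 h0' t ht
  · -- apply the lemma to g(s) = f(-s)
    set g : ℝ → ℝ := fun s => f (-s) with hgdef
    have hg : ContDiff ℝ 2 g := hf.comp (contDiff_neg)
    have hg1 : deriv g = fun s => -deriv f (-s) := by
      funext s
      exact deriv_comp_neg f s
    have hg2 : ∀ s, deriv (deriv g) s = deriv (deriv f) (-s) := by
      intro s
      rw [hg1]
      have : deriv (fun s => -deriv f (-s)) s = -deriv (fun s => deriv f (-s)) s :=
        deriv.neg
      rw [this, deriv_comp_neg (deriv f) s, neg_neg]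
    have := jacobi_aux (fun s => K (-s)) g (fun s => hKneg (-s)) hg
      (fun s => by rw [hg2 s]; exact hode (-s))
      (by simp [hgdef, h0]) (by rw [hg1]; simp [h0']) (-t) (by linarith)
    simpa [hgdef] using this
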